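/- Let S be an m-dimensional space of C^{m-1} functions on [a,b] containing constants such that DS is an (m-1)-dimensional EC-space on [a,b], and let f₂,...,f_m be the transition functions with f₁ ≡ 1, f_{m+1} ≡ 0. Define w₁ = ∑_{ℓ=2}^m f_ℓ'. Then w₁ > 0 on all of [a,b] (including one-sided at the endpoints a and b). -/

import Mathlib

def VanishesTo (F : ℝ → ℝ) (x : ℝ) (μ : ℕ) : Prop :=
  ∀ r < μ, iteratedDeriv r F x = 0

def AtMostZeros (m : ℕ) (I : Set ℝ) (F : ℝ → ℝ) : Prop :=
  ∀ (h : ℕ) (τ : Fin h → ℝ) (μ : Fin h → ℕ),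
    Function.Injective τ → (∀ j, τ j ∈ I) → (∀ j, 1 ≤ μ j ∧ μ j ≤ m) →
    (∑ j, μ j) = m → ¬ (∀ j, VanishesTo F (τ j) (μ j))

lemma vt_one {F : ℝ → ℝ} {x : ℝ} (h : F x = 0) : VanishesTo F x 1 := by
  intro r hr
  interval_cases r
  simpa [iteratedDeriv_zero] using h

lemma notAMZ1 {m' : ℕ} {I : Set ℝ} {F : ℝ → ℝ} {u : ℝ}
    (hu : u ∈ I) (hm : 1 ≤ m') (hv : VanishesTo F u m') :
    ¬ AtMostZeros m' I F := by
  intro H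
  exact H 1 ![u] ![m'] (Function.injective_of_subsingleton _)
    (by intro j; fin_cases j <;> simpa)
    (by intro j; fin_cases j <;> exact ⟨hm, le_rfl⟩)
    (by simp)
    (by intro j; fin_cases j <;> simpa)

lemma notAMZ2 {m' : ℕ} {I : Set ℝ} {F : ℝ → ℝ} {u v : ℝ} {p q : ℕ}
    (huv : u ≠ v) (hu : u ∈ I) (hv : v ∈ I)
    (hp : 1 ≤ p) (hq : 1 ≤ q) (hsum : p + q = m')
    (hFu : VanishesTo F u p) (hFv : VanishesTo F v q) :
    ¬ AtMostZeros m' I F := by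
  intro H
  exact H 2 ![u, v] ![p, q]
    (by intro i j hij; fin_cases i <;> fin_cases j <;> simp_all)
    (by intro j; fin_cases j <;> simpa)
    (by intro j; fin_cases j <;> simp <;> omega)
    (by simp [Fin.sum_univ_two, hsum])
    (by intro j; fin_cases j <;> simpa)

lemma notAMZ3 {m' : ℕ} {I : Set ℝ} {F : ℝ → ℝ} {u v w : ℝ} {p q r : ℕ}
    (huv : u ≠ v) (huw : u ≠ w) (hvw : v ≠ w)
    (hu : u ∈ I) (hv : v ∈ I) (hw : w ∈ I)
    (hp : 1 ≤ p) (hq : 1 ≤ q) (hr : 1 ≤ r) (hsum : p + q + r = m')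
    (hFu : VanishesTo F u p) (hFv : VanishesTo F v q) (hFw : VanishesTo F w r) :
    ¬ AtMostZeros m' I F := by
  intro H
  exact H 3 ![u, v, w] ![p, q, r]
    (by intro i j hij; fin_cases i <;> fin_cases j <;> simp_all)
    (by intro j; fin_cases j <;> simpa)
    (by intro j; fin_cases j <;> simp <;> omega)
    (by simp [Fin.sum_univ_three, hsum])
    (by intro j; fin_cases j <;> simpa)

lemma pos_on {g : ℝ → ℝ} (cont : Continuous g) {s : Set ℝ} (hconn : s.OrdConnected)
    (hne : ∀ y ∈ s, g y ≠ 0) {c : ℝ} (hc : c ∈ s) (hgc : 0 < g c) :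
    ∀ x ∈ s, 0 < g x := by
  intro x hx
  rcases (hne x hx).lt_or_gt with h | h
  · exfalso
    rcases le_total x c with hxc | hcx
    · obtain ⟨y, hy, hgy⟩ := intermediate_value_Icc hxc cont.continuousOn
        (Set.mem_Icc.mpr ⟨h.le, hgc.le⟩)
      exact hne y (hconn.out hx hc hy) hgy
    · obtain ⟨y, hy, hgy⟩ := intermediate_value_Icc' hcx cont.continuousOn
        (Set.mem_Icc.mpr ⟨h.le, hgc.le⟩)
      exact hne y (hconn.out hc hx hy) hgy
  · exact h

theorem stmt_16 (m : ℕ) (hm : 2 ≤ m) (a b : ℝ) (hab : a < b)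
    (S : Submodule ℝ (ℝ → ℝ))
    (hdim : Module.finrank ℝ S = m)
    (hsm : ∀ F ∈ S, ContDiff ℝ (m - 1 : ℕ) F)
    (h1 : (fun _ => (1 : ℝ)) ∈ S)
    (hDSdim : Module.finrank ℝ ↥(Submodule.span ℝ (deriv '' (S : Set (ℝ → ℝ)))) = m - 1)
    (hDSEC : ∀ F ∈ S, (∃ x ∈ Set.Icc a b, deriv F x ≠ 0) →
      AtMostZeros (m - 1) (Set.Icc a b) (deriv F))
    (f : ℕ → ℝ → ℝ)
    (hf1 : f 1 = fun _ => 1)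
    (hftop : f (m + 1) = fun _ => 0)
    (hfS : ∀ ℓ, 1 ≤ ℓ → ℓ ≤ m → f ℓ ∈ S)
    (ha0 : ∀ ℓ, 2 ≤ ℓ → ℓ ≤ m → ∀ r ≤ ℓ - 2, iteratedDeriv r (f ℓ) a = 0)
    (hb1 : ∀ ℓ, 2 ≤ ℓ → ℓ ≤ m → f ℓ b = 1)
    (hb0 : ∀ ℓ, 2 ≤ ℓ → ℓ ≤ m → ∀ r, 1 ≤ r → r ≤ m - ℓ → iteratedDeriv r (f ℓ) b = 0) :
    ∀ x ∈ Set.Icc a b, 0 < ∑ ℓ ∈ Finset.Icc 2 m, deriv (f ℓ) x := by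
  have hm1 : (1 : WithTop ℕ∞) ≤ ((m - 1 : ℕ) : ℕ∞) := by exact_mod_cast (by omega : 1 ≤ m - 1)
  -- main per-ℓ analysis
  have step : ∀ ℓ, 2 ≤ ℓ → ℓ ≤ m →
      (∀ x ∈ Set.Ioo a b, 0 < deriv (f ℓ) x) ∧
      (ℓ = 2 → 0 < deriv (f ℓ) a) ∧ (ℓ = m → 0 < deriv (f ℓ) b) := by
    intro ℓ hℓ2 hℓm
    have hfmem : f ℓ ∈ S := hfS ℓ (by omega) hℓm
    have hcd : ContDiff ℝ (m - 1 : ℕ) (f ℓ) := hsm _ hfmem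
    have hcont : Continuous (deriv (f ℓ)) := hcd.continuous_deriv hm1
    have hdiff : Differentiable ℝ (f ℓ) := hcd.differentiable (by exact_mod_cast (by omega : m - 1 ≠ 0))
    have hfa : f ℓ a = 0 := by
      have := ha0 ℓ hℓ2 hℓm 0 (by omega)
      simpa [iteratedDeriv_zero] using this
    have hfb : f ℓ b = 1 := hb1 ℓ hℓ2 hℓm
    -- vanishing of the derivative at the endpoints
    have hva : VanishesTo (deriv (f ℓ)) a (ℓ - 2) := by
      intro r hr
      rw [← iteratedDeriv_succ']
      exact ha0 ℓ hℓ2 hℓm (r + 1) (by omega)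
    have hvb : VanishesTo (deriv (f ℓ)) b (m - ℓ) := by
      intro r hr
      rw [← iteratedDeriv_succ']
      exact hb0 ℓ hℓ2 hℓm (r + 1) (by omega) (by omega)
    -- mean value theorem: positive derivative somewhere
    obtain ⟨c, hc, hderc⟩ := exists_deriv_eq_slope (f ℓ) hab hdiff.continuous.continuousOn
      (fun x _ => (hdiff x).differentiableWithinAt)
    have hcpos : 0 < deriv (f ℓ) c := by
      rw [hderc, hfa, hfb]
      have : (0:ℝ) < b - a := sub_pos.mpr hab
      positivity
    have hAMZ : AtMostZeros (m - 1) (Set.Icc a b) (deriv (f ℓ)) :=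
      hDSEC (f ℓ) hfmem ⟨c, Set.mem_Icc.mpr ⟨hc.1.le, hc.2.le⟩, ne_of_gt hcpos⟩
    have haI : a ∈ Set.Icc a b := Set.left_mem_Icc.mpr hab.le
    have hbI : b ∈ Set.Icc a b := Set.right_mem_Icc.mpr hab.le
    -- nonvanishing
    have hnex : ∀ x ∈ Set.Icc a b,
        (x ∈ Set.Ioo a b ∨ (x = a ∧ ℓ = 2) ∨ (x = b ∧ ℓ = m)) →
        deriv (f ℓ) x ≠ 0 := by
      rintro x hxI hcase hx0
      rcases hcase with hx | ⟨rfl, heq⟩ | ⟨rfl, heq⟩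
      · -- interior zero: a (ℓ-2), x (1), b (m-ℓ)
        rcases Nat.eq_zero_or_pos (ℓ - 2) with hα | hα <;>
          rcases Nat.eq_zero_or_pos (m - ℓ) with hβ | hβ
        · exact notAMZ1 hxI (by omega) (by
            have : m - 1 = 1 := by omega
            rw [this]; exact vt_one hx0) hAMZ
        · exact notAMZ2 (ne_of_lt hx.2) hxI hbI le_rfl hβ (by omega)
            (vt_one hx0) hvb hAMZ
        · exact notAMZ2 (ne_of_lt hx.1) haI hxI hα le_rfl (by omega)
            hva (vt_one hx0) hAMZ
        · exact notAMZ3 (ne_of_lt hx.1) (ne_of_lt hab) (ne_of_lt hx.2)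
            haI hxI hbI hα le_rfl hβ (by omega) hva (vt_one hx0) hvb hAMZ
      · -- x = a, ℓ = 2
        rcases Nat.eq_zero_or_pos (m - ℓ) with hβ | hβ
        · exact notAMZ1 haI (by omega) (by
            have : m - 1 = 1 := by omega
            rw [this]; exact vt_one hx0) hAMZ
        · exact notAMZ2 (ne_of_lt hab) haI hbI le_rfl hβ (by omega)
            (vt_one hx0) hvb hAMZ
      · -- x = b, ℓ = m
        rcases Nat.eq_zero_or_pos (ℓ - 2) with hα | hα
        · exact notAMZ1 hbI (by omega) (by
            have : m - 1 = 1 := by omega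
            rw [this]; exact vt_one hx0) hAMZ
        · exact notAMZ2 (ne_of_lt hab) haI hbI hα le_rfl (by omega)
            hva (vt_one hx0) hAMZ
    have hIoo : ∀ x ∈ Set.Ioo a b, 0 < deriv (f ℓ) x :=
      pos_on hcont Set.ordConnected_Ioo
        (fun y hy => hnex y (Set.Ioo_subset_Icc_self hy) (Or.inl hy)) hc hcpos
    refine ⟨hIoo, ?_, ?_⟩
    · rintro rfl
      have := pos_on hcont Set.ordConnected_Ico
        (fun y hy => hnex y (Set.Ico_subset_Icc_self hy) (by
          rcases eq_or_lt_of_le hy.1 with h | h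
          · exact Or.inr (Or.inl ⟨h.symm, rfl⟩)
          · exact Or.inl ⟨h, hy.2⟩))
        (Set.mem_Ico.mpr ⟨hc.1.le, hc.2⟩) hcpos
      exact this a (Set.mem_Ico.mpr ⟨le_rfl, hab⟩)
    · rintro rfl
      have := pos_on hcont Set.ordConnected_Ioc
        (fun y hy => hnex y (Set.Ioc_subset_Icc_self hy) (by
          rcases eq_or_lt_of_le hy.2 with h | h
          · exact Or.inr (Or.inr ⟨h, rfl⟩)
          · exact Or.inl ⟨hy.1, h⟩))
        (Set.mem_Ioc.mpr ⟨hc.1, hc.2.le⟩) hcpos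
      exact this b (Set.mem_Ioc.mpr ⟨hab, le_rfl⟩)
  intro x hx
  have h2mem : (2 : ℕ) ∈ Finset.Icc 2 m := Finset.mem_Icc.mpr ⟨le_rfl, hm⟩
  have hmmem : m ∈ Finset.Icc 2 m := Finset.mem_Icc.mpr ⟨hm, le_rfl⟩
  rcases eq_or_lt_of_le hx.1 with hxa | hxa
  · -- x = a
    have hsum : ∑ ℓ ∈ Finset.Icc 2 m, deriv (f ℓ) x = deriv (f 2) x := by
      refine Finset.sum_eq_single_of_mem 2 h2mem ?_
      intro ℓ hℓ hne
      rw [Finset.mem_Icc] at hℓ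
      rw [← hxa, ← iteratedDeriv_one]
      exact ha0 ℓ hℓ.1 hℓ.2 1 (by omega)
    rw [hsum, ← hxa]
    exact (step 2 le_rfl hm).2.1 rfl
  rcases eq_or_lt_of_le hx.2 with hxb | hxb
  · -- x = b
    have hsum : ∑ ℓ ∈ Finset.Icc 2 m, deriv (f ℓ) x = deriv (f m) x := by
      refine Finset.sum_eq_single_of_mem m hmmem ?_
      intro ℓ hℓ hne
      rw [Finset.mem_Icc] at hℓ
      rw [hxb, ← iteratedDeriv_one]
      exact hb0 ℓ hℓ.1 hℓ.2 1 le_rfl (by omega)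
    rw [hsum, hxb]
    exact (step m hm le_rfl).2.2 rfl
  · -- interior
    refine Finset.sum_pos ?_ ⟨2, h2mem⟩
    intro ℓ hℓ
    rw [Finset.mem_Icc] at hℓ
    exact (step ℓ hℓ.1 hℓ.2).1 x ⟨hxa, hxb⟩
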